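/- In the original Calkin-Wilf tree (u=v=1), if α_i and α_{i+1} are consecutive entries in a row, then α_{i+1} = 1/(2⌊α_i⌋ + 1 − α_i). -/

import Mathlib

theorem newman_successor_formula (w : ℚ) (hw : 0 < w) (k : ℕ) (α β : ℚ)
    (hα : α = w / (w + 1) + k)
    (hβ : β = (w + 1) / (k * (w + 1) + 1)) :
    β = 1 / (2 * (⌊α⌋ : ℚ) + 1 - α) := by
  have hw1 : (0:ℚ) < w + 1 := by linarith
  have hfrac0 : 0 ≤ w / (w + 1) := by positivity
  have hfrac1 : w / (w + 1) < 1 := by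
    rw [div_lt_one hw1]; linarith
  have hfloor : ⌊α⌋ = (k : ℤ) := by
    rw [Int.floor_eq_iff]
    constructor <;> push_cast <;> rw [hα] <;> linarith
  have hden : (k : ℚ) * (w + 1) + 1 > 0 := by positivity
  have key : 2 * ((k:ℤ) : ℚ) + 1 - α = ((k:ℚ) * (w + 1) + 1) / (w + 1) := by
    rw [hα]; field_simp; push_cast; ring
  rw [hfloor, hβ, key, one_div_div]
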